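/- Let J be a uniformly perfect compact subset of a metric space and ρ a doubling measure supported on J. Then there exist η₁ > 1 and r₁ > 0 such that for every r ∈ (0, r₁) and every x ∈ J, ρ(B(x, η₁ r)) ≥ 2 ρ(B(x, r)). -/

import Mathlib

open MeasureTheory Metric ENNReal

/-- For a doubling measure supported on a uniformly perfect compact set `J`,
some fixed inflation of radii doubles the measure of balls. -/
theorem stmt2 {X : Type*} [MetricSpace X] [MeasurableSpace X] [BorelSpace X]
    (J : Set X) (hJ : IsCompact J)
    (ρ : Measure X) (hsupp : ρ Jᶜ = 0)
    (Cs rs : ℝ) (hCs : 0 < Cs) (hrs : 0 < rs)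
    (hdoub : ∀ x ∈ J, ∀ r : ℝ, 0 < r → r < rs →
      ρ (ball x (2 * r)) ≤ ENNReal.ofReal Cs * ρ (ball x r))
    (etaH rH : ℝ) (hetaH : 1 < etaH) (hrH : 0 < rH)
    (hup : ∀ x ∈ J, ∀ r : ℝ, 0 < r → r < rH →
      ((ball x (etaH * r) \ ball x r) ∩ J).Nonempty) :
    ∃ η₁ > (1 : ℝ), ∃ r₁ > (0 : ℝ), ∀ r : ℝ, 0 < r → r < r₁ → ∀ x ∈ J,
      2 * ρ (ball x r) ≤ ρ (ball x (η₁ * r)) := by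
  classical
  -- Enlarge the doubling constant to be ≥ 1
  set Creal : ℝ := max Cs 1 with hCreal
  have hC1 : (1 : ℝ) ≤ Creal := le_max_right _ _
  have hC0 : (0 : ℝ) ≤ Creal := le_trans zero_le_one hC1
  set C : ℝ≥0∞ := ENNReal.ofReal Creal with hCdef
  have hdoub' : ∀ x ∈ J, ∀ r : ℝ, 0 < r → r < rs →
      ρ (ball x (2 * r)) ≤ C * ρ (ball x r) := by
    intro x hx r hr hrs'
    refine (hdoub x hx r hr hrs').trans ?_
    exact mul_le_mul_left (ENNReal.ofReal_le_ofReal (le_max_left _ _)) _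
  -- iterated doubling
  have chain : ∀ (x : X), x ∈ J → ∀ n : ℕ, ∀ r : ℝ, 0 < r → 2 ^ n * r ≤ rs →
      ρ (ball x (2 ^ n * r)) ≤ C ^ n * ρ (ball x r) := by
    intro x hx n
    induction n with
    | zero => intro r hr _; simp
    | succ n ih =>
      intro r hr hle
      have h2n : (0:ℝ) < 2 ^ n * r := by positivity
      have hmono : (2:ℝ) ^ n * r ≤ 2 ^ (n+1) * r := by
        have : (2:ℝ) ^ n ≤ 2 ^ (n+1) := by
          apply pow_le_pow_right₀ (by norm_num) (by omega)
        nlinarith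
      have hlt : (2:ℝ) ^ n * r < rs := by
        have : (2:ℝ) ^ (n+1) * r = 2 * (2 ^ n * r) := by ring
        nlinarith [hle, h2n]
      have h1 : ρ (ball x (2 ^ (n+1) * r)) ≤ C * ρ (ball x (2 ^ n * r)) := by
        have heq : (2:ℝ) ^ (n+1) * r = 2 * (2 ^ n * r) := by ring
        rw [heq]
        exact hdoub' x hx _ h2n hlt
      calc ρ (ball x (2 ^ (n+1) * r)) ≤ C * ρ (ball x (2 ^ n * r)) := h1
        _ ≤ C * (C ^ n * ρ (ball x r)) :=
            mul_le_mul_right (ih r hr (hmono.trans hle)) _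
        _ = C ^ (n+1) * ρ (ball x r) := by ring
  -- choose m with 2*etaH+1 < 2^m', m := m'+1
  obtain ⟨m', hm'⟩ : ∃ n : ℕ, 2 * etaH + 1 < 2 ^ n :=
    pow_unbounded_of_one_lt _ (by norm_num)
  set m : ℕ := m' + 1 with hmdef
  set η₀ : ℝ := 2 * etaH + 1 with hη₀def
  have hη₀ : (1:ℝ) < η₀ := by simp only [hη₀def]; linarith
  have hη₀0 : (0:ℝ) < η₀ := by linarith
  set T : ℝ := min (rH / 4) (2 * rs / 2 ^ m) with hTdef
  have hT0 : (0:ℝ) < T := by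
    apply lt_min (by linarith)
    positivity
  -- one step of the gain
  have step : ∀ x ∈ J, ∀ r : ℝ, 0 < r → r ≤ T →
      (C ^ m + 1) * ρ (ball x r) ≤ C ^ m * ρ (ball x (η₀ * r)) := by
    intro x hx r hr hrT
    have hrH4 : r ≤ rH / 4 := hrT.trans (min_le_left _ _)
    have hrrs : 2 ^ m * (r / 2) ≤ rs := by
      have h' : r ≤ 2 * rs / 2 ^ m := hrT.trans (min_le_right _ _)
      have h2m : (0:ℝ) < 2 ^ m := by positivity
      rw [le_div_iff₀ h2m] at h'
      nlinarith
    have h2r : (0:ℝ) < 2 * r := by linarith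
    have h2rH : 2 * r < rH := by linarith
    obtain ⟨y, hy⟩ := hup x hx (2 * r) h2r h2rH
    obtain ⟨⟨hy1, hy2⟩, hyJ⟩ := hy
    have hdy1 : dist y x < etaH * (2 * r) := by simpa [dist_comm] using hy1
    have hdy2 : 2 * r ≤ dist y x := by
      by_contra h
      exact hy2 (by simpa [mem_ball, dist_comm] using lt_of_not_ge h)
    -- disjointness
    have hdisj : Disjoint (ball x r) (ball y (r / 2)) := by
      rw [Set.disjoint_left]
      intro z hz1 hz2
      rw [mem_ball] at hz1 hz2
      have : dist y x ≤ dist y z + dist z x := dist_triangle _ _ _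
      rw [dist_comm y z] at this
      linarith
    -- inclusions
    have hsub1 : ball x r ⊆ ball y (2 ^ m * (r / 2)) := by
      intro z hz
      rw [mem_ball] at hz ⊢
      have ht : dist z y ≤ dist z x + dist x y := dist_triangle _ _ _
      have hxy : dist x y < etaH * (2 * r) := by rwa [dist_comm]
      have hη : η₀ * r ≤ 2 ^ m * (r / 2) := by
        have : (2:ℝ) ^ m * (r / 2) = 2 ^ m' * r := by
          rw [hmdef, pow_succ]; ring
        rw [this]
        nlinarith [hm', hr.le]
      calc dist z y ≤ dist z x + dist x y := ht
        _ < r + etaH * (2 * r) := by linarith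
        _ = η₀ * r := by rw [hη₀def]; ring
        _ ≤ 2 ^ m * (r / 2) := hη
    have hsub2 : ball y (r / 2) ⊆ ball x (η₀ * r) := by
      intro z hz
      rw [mem_ball] at hz ⊢
      have ht : dist z x ≤ dist z y + dist y x := dist_triangle _ _ _
      calc dist z x ≤ dist z y + dist y x := ht
        _ < r / 2 + etaH * (2 * r) := by linarith
        _ ≤ η₀ * r := by rw [hη₀def]; nlinarith
    have hsub3 : ball x r ⊆ ball x (η₀ * r) :=
      ball_subset_ball (by nlinarith)
    have hunion : ball x r ∪ ball y (r / 2) ⊆ ball x (η₀ * r) :=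
      Set.union_subset hsub3 hsub2
    have hmeas : ρ (ball x r ∪ ball y (r / 2)) =
        ρ (ball x r) + ρ (ball y (r / 2)) :=
      measure_union hdisj measurableSet_ball
    have hchain : ρ (ball y (2 ^ m * (r / 2))) ≤ C ^ m * ρ (ball y (r / 2)) :=
      chain y hyJ m (r / 2) (by linarith) hrrs
    have hsmall : ρ (ball x r) ≤ C ^ m * ρ (ball y (r / 2)) :=
      le_trans (measure_mono hsub1) hchain
    calc (C ^ m + 1) * ρ (ball x r)
        = C ^ m * ρ (ball x r) + ρ (ball x r) := by ring
      _ ≤ C ^ m * ρ (ball x r) + C ^ m * ρ (ball y (r / 2)) :=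
          add_le_add_right hsmall _
      _ = C ^ m * (ρ (ball x r) + ρ (ball y (r / 2))) := by ring
      _ = C ^ m * ρ (ball x r ∪ ball y (r / 2)) := by rw [hmeas]
      _ ≤ C ^ m * ρ (ball x (η₀ * r)) :=
          mul_le_mul_right (measure_mono hunion) _
  -- iterate
  have iter : ∀ k : ℕ, ∀ x ∈ J, ∀ r : ℝ, 0 < r → η₀ ^ k * r ≤ T →
      (C ^ m + 1) ^ k * ρ (ball x r) ≤ (C ^ m) ^ k * ρ (ball x (η₀ ^ k * r)) := by
    intro k
    induction k with
    | zero => intro x hx r hr _; simp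
    | succ k ih =>
      intro x hx r hr hle
      have hmono : η₀ ^ k * r ≤ η₀ ^ (k+1) * r := by
        have : η₀ ^ k ≤ η₀ ^ (k+1) := pow_le_pow_right₀ hη₀.le (by omega)
        nlinarith
      have hk : η₀ ^ k * r ≤ T := hmono.trans hle
      have hs : (0:ℝ) < η₀ ^ k * r := by positivity
      have hstep := step x hx (η₀ ^ k * r) hs hk
      have heq : η₀ * (η₀ ^ k * r) = η₀ ^ (k+1) * r := by ring
      rw [heq] at hstep
      calc (C ^ m + 1) ^ (k+1) * ρ (ball x r)
          = (C ^ m + 1) * ((C ^ m + 1) ^ k * ρ (ball x r)) := by ring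
        _ ≤ (C ^ m + 1) * ((C ^ m) ^ k * ρ (ball x (η₀ ^ k * r))) :=
            mul_le_mul_right (ih x hx r hr hk) _
        _ = (C ^ m) ^ k * ((C ^ m + 1) * ρ (ball x (η₀ ^ k * r))) := by ring
        _ ≤ (C ^ m) ^ k * (C ^ m * ρ (ball x (η₀ ^ (k+1) * r))) :=
            mul_le_mul_right hstep _
        _ = (C ^ m) ^ (k+1) * ρ (ball x (η₀ ^ (k+1) * r)) := by ring
  -- choose k
  set D : ℝ := Creal ^ m with hDdef
  have hD1 : (1:ℝ) ≤ D := one_le_pow₀ hC1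
  have hD0 : (0:ℝ) < D := by linarith
  obtain ⟨k, hk⟩ : ∃ k : ℕ, 2 * D ^ k ≤ (D + 1) ^ k := by
    obtain ⟨k, hk⟩ : ∃ k : ℕ, (2:ℝ) < ((D + 1) / D) ^ k :=
      pow_unbounded_of_one_lt _ (by rw [lt_div_iff₀ hD0]; linarith)
    refine ⟨k, ?_⟩
    have hDk : (0:ℝ) < D ^ k := by positivity
    rw [div_pow, lt_div_iff₀ hDk] at hk
    linarith
  have hk0 : k ≠ 0 := by
    intro h
    rw [h] at hk
    norm_num at hk
  refine ⟨η₀ ^ k, one_lt_pow₀ hη₀ hk0, T / η₀ ^ k, by positivity, ?_⟩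
  intro r hr hrlt x hx
  have hle : η₀ ^ k * r ≤ T := by
    have h := (lt_div_iff₀ (show (0:ℝ) < η₀ ^ k by positivity)).mp hrlt
    nlinarith
  have hiter := iter k x hx r hr hle
  -- rewrite ENNReal powers as ofReal
  have hCm : C ^ m = ENNReal.ofReal D := by
    rw [hCdef, hDdef, ← ENNReal.ofReal_pow hC0]
  have hCmk : (C ^ m) ^ k = ENNReal.ofReal (D ^ k) := by
    rw [hCm, ← ENNReal.ofReal_pow hD0.le]
  have hCm1k : (C ^ m + 1) ^ k = ENNReal.ofReal ((D + 1) ^ k) := by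
    rw [hCm, ← ENNReal.ofReal_one, ← ENNReal.ofReal_add hD0.le zero_le_one,
      ← ENNReal.ofReal_pow (by linarith)]
  have hgain : ENNReal.ofReal (D ^ k) * (2 * ρ (ball x r)) ≤
      ENNReal.ofReal (D ^ k) * ρ (ball x (η₀ ^ k * r)) := by
    calc ENNReal.ofReal (D ^ k) * (2 * ρ (ball x r))
        = (2 * ENNReal.ofReal (D ^ k)) * ρ (ball x r) := by ring
      _ = ENNReal.ofReal (2 * D ^ k) * ρ (ball x r) := by
          rw [ENNReal.ofReal_mul (by norm_num), ENNReal.ofReal_ofNat]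
      _ ≤ ENNReal.ofReal ((D + 1) ^ k) * ρ (ball x r) :=
          mul_le_mul_left (ENNReal.ofReal_le_ofReal hk) _
      _ = (C ^ m + 1) ^ k * ρ (ball x r) := by rw [hCm1k]
      _ ≤ (C ^ m) ^ k * ρ (ball x (η₀ ^ k * r)) := hiter
      _ = ENNReal.ofReal (D ^ k) * ρ (ball x (η₀ ^ k * r)) := by rw [hCmk]
  have hne0 : ENNReal.ofReal (D ^ k) ≠ 0 := by
    simp [ENNReal.ofReal_eq_zero, not_le]
    positivity
  exact (ENNReal.mul_le_mul_iff_right hne0 ENNReal.ofReal_ne_top).mp hgain
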